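/- Let M > 0 and let f = h + conj(g) be a harmonic mapping in the class W⁰_H(0) (i.e. Re h'(z) > |g'(z)| for all z ∈ D, with the stated normalization) such that |f(z)| < M for all z ∈ D. Then f is univalent (injective) on the disc D_{ρ₂} with ρ₂ = π/(8M + π), and the image f(D_{ρ₂}) contains the disc {w ∈ ℂ : |w| < R₂} with R₂ = π/(4M) + 2·ln( 8M/(π + 8M) ). -/

import Mathlib

open Metric Set Complex

/-- Compatibility: the complex absolute value as an `AbsoluteValue`, equal to the norm. -/
noncomputable def Complex.abs : AbsoluteValue ℂ ℝ where
  toFun z := ‖z‖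
  map_mul' := norm_mul
  nonneg' := norm_nonneg
  eq_zero' _ := norm_eq_zero
  add_le' := norm_add_le

namespace Complex

theorem abs_apply (z : ℂ) : Complex.abs z = Real.sqrt (normSq z) := norm_def z

@[simp] theorem abs_ofReal (r : ℝ) : Complex.abs r = |r| := by
  change ‖(r : ℂ)‖ = |r|
  rw [norm_real, Real.norm_eq_abs]

theorem norm_eq_abs (z : ℂ) : ‖z‖ = Complex.abs z := rfl

@[simp] theorem abs_conj (z : ℂ) : Complex.abs (starRingEnd ℂ z) = Complex.abs z := norm_conj z

@[simp] theorem abs_two : Complex.abs 2 = 2 := Complex.norm_two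

@[simp] theorem abs_I : Complex.abs I = 1 := norm_I

theorem abs_re_le_abs (z : ℂ) : |z.re| ≤ Complex.abs z := abs_re_le_norm z

theorem re_le_abs (z : ℂ) : z.re ≤ Complex.abs z := re_le_norm z

theorem sq_abs (z : ℂ) : Complex.abs z ^ 2 = normSq z := Complex.sq_norm z

theorem abs_le_abs_of_mapsTo_ball_self {f : ℂ → ℂ} {R : ℝ} {z : ℂ}
    (hd : DifferentiableOn ℂ f (ball 0 R)) (h_maps : MapsTo f (ball 0 R) (ball 0 R))
    (h₀ : f 0 = 0) (hz : Complex.abs z < R) : Complex.abs (f z) ≤ Complex.abs z :=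
  norm_le_norm_of_mapsTo_ball hd (h_maps.mono_right ball_subset_closedBall) h₀ hz

end Complex

/-- Carathéodory-type pointwise bound via the Schwarz lemma. -/
lemma cara_pointwise (p : ℂ → ℂ) (hp : DifferentiableOn ℂ p (ball 0 1))
    (hp0 : p 0 = 1) (hre : ∀ z ∈ ball (0:ℂ) 1, 0 < (p z).re)
    {z : ℂ} (hz : z ∈ ball (0:ℂ) 1) :
    Complex.abs (p z - 1) ≤ 2 * Complex.abs z / (1 - Complex.abs z) := by
  have hz1 : Complex.abs z < 1 := by simpa [mem_ball, dist_eq, Complex.norm_eq_abs] using hz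
  have hden : ∀ w ∈ ball (0:ℂ) 1, p w + 1 ≠ 0 := by
    intro w hw hcontra
    have : (p w + 1).re = 0 := by rw [hcontra]; simp
    have := hre w hw
    simp [Complex.add_re] at *
    linarith
  set ω : ℂ → ℂ := fun w => (p w - 1) / (p w + 1) with hω
  have hωd : DifferentiableOn ℂ ω (ball 0 1) :=
    DifferentiableOn.div (hp.sub (differentiableOn_const 1))
      (hp.add (differentiableOn_const 1)) hden
  have hωmaps : Set.MapsTo ω (ball 0 1) (ball 0 1) := by
    intro w hw
    have h1 : Complex.abs (p w - 1) < Complex.abs (p w + 1) := by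
      have : Complex.normSq (p w + 1) - Complex.normSq (p w - 1) = 4 * (p w).re := by
        simp [Complex.normSq_apply, Complex.add_re, Complex.add_im, Complex.sub_re,
          Complex.sub_im]
        ring
      have h4 := hre w hw
      have : Complex.normSq (p w - 1) < Complex.normSq (p w + 1) := by linarith
      have := Real.sqrt_lt_sqrt (Complex.normSq_nonneg _) this
      simpa [Complex.abs_apply] using this
    have hpos : 0 < Complex.abs (p w + 1) := lt_of_le_of_lt (Complex.abs.nonneg _) h1
    have : Complex.abs (ω w) < 1 := by
      rw [hω]
      simp only [map_div₀]
      rw [div_lt_one hpos]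
      exact h1
    simpa [mem_ball, dist_eq, Complex.norm_eq_abs] using this
  have hω0 : ω 0 = 0 := by simp [hω, hp0]
  have hschwarz : Complex.abs (ω z) ≤ Complex.abs z :=
    Complex.abs_le_abs_of_mapsTo_ball_self hωd hωmaps hω0 hz1
  have hne : p z + 1 ≠ 0 := hden z hz
  have key : Complex.abs (p z - 1) ≤ Complex.abs z * (Complex.abs (p z - 1) + 2) := by
    have h1 : Complex.abs (p z - 1) = Complex.abs (ω z) * Complex.abs (p z + 1) := by
      rw [hω]; simp only [map_div₀]
      rw [div_mul_cancel₀]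
      exact (Complex.abs.ne_zero hne)
    calc Complex.abs (p z - 1) = Complex.abs (ω z) * Complex.abs (p z + 1) := h1
      _ ≤ Complex.abs z * Complex.abs (p z + 1) := by
          apply mul_le_mul_of_nonneg_right hschwarz (Complex.abs.nonneg _)
      _ ≤ Complex.abs z * (Complex.abs (p z - 1) + 2) := by
          apply mul_le_mul_of_nonneg_left _ (Complex.abs.nonneg _)
          calc Complex.abs (p z + 1) = Complex.abs ((p z - 1) + 2) := by ring_nf
            _ ≤ Complex.abs (p z - 1) + Complex.abs 2 := Complex.abs.add_le _ _
            _ = Complex.abs (p z - 1) + 2 := by simp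
  have h1z : 0 < 1 - Complex.abs z := by linarith
  rw [le_div_iff₀ h1z]
  nlinarith [Complex.abs.nonneg (p z - 1)]

section Main
variable {M : ℝ} {h g : ℂ → ℂ}

/-- The key coefficient-free distortion bound for the class `W⁰_H(0)`. -/
lemma pair_bound (hh : DifferentiableOn ℂ h (Metric.ball 0 1))
    (hg : DifferentiableOn ℂ g (Metric.ball 0 1))
    (hh1 : deriv h 0 = 1) (hg1 : deriv g 0 = 0)
    (hclass : ∀ z ∈ Metric.ball (0:ℂ) 1, (deriv h z).re > Complex.abs (deriv g z))
    {z : ℂ} (hz : z ∈ Metric.ball (0:ℂ) 1) :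
    Complex.abs (deriv h z - 1) + Complex.abs (deriv g z)
      ≤ 2 * Complex.abs z / (1 - Complex.abs z) := by
  have hh' : DifferentiableOn ℂ (deriv h) (ball 0 1) :=
    ((hh.analyticOnNhd isOpen_ball).deriv).differentiableOn
  have hg' : DifferentiableOn ℂ (deriv g) (ball 0 1) :=
    ((hg.analyticOnNhd isOpen_ball).deriv).differentiableOn
  set a : ℂ := deriv h z - 1 with ha
  set b : ℂ := deriv g z with hb
  -- choose a unimodular c aligning c*b with a
  obtain ⟨c, hc1, hcb⟩ : ∃ c : ℂ, Complex.abs c = 1 ∧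
      Complex.abs (a + c * b) = Complex.abs a + Complex.abs b := by
    by_cases hb0 : b = 0
    · exact ⟨1, by simp, by simp [hb0]⟩
    · set a' : ℂ := if a = 0 then 1 else a / Complex.abs a with ha'
      have ha'1 : Complex.abs a' = 1 := by
        by_cases h0 : a = 0
        · simp [ha', h0]
        · simp only [ha', h0, if_false, map_div₀, Complex.abs_ofReal,
            _root_.abs_of_nonneg (Complex.abs.nonneg a)]
          exact div_self (Complex.abs.ne_zero h0)
      refine ⟨a' * (Complex.abs b) / b, ?_, ?_⟩
      · simp only [map_div₀, map_mul, ha'1, Complex.abs_ofReal,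
          _root_.abs_of_nonneg (Complex.abs.nonneg b), one_mul]
        exact div_self (Complex.abs.ne_zero hb0)
      · have : a' * (Complex.abs b) / b * b = a' * Complex.abs b := by
          field_simp
        rw [this]
        by_cases h0 : a = 0
        · simp [ha', h0]
        · have : a + a' * Complex.abs b = a * (1 + (Complex.abs b / Complex.abs a)) := by
            rw [ha']; simp [h0]
            field_simp
          rw [this, map_mul]
          have : Complex.abs (1 + ((Complex.abs b : ℂ) / (Complex.abs a : ℂ)))
              = 1 + Complex.abs b / Complex.abs a := by
            rw [show ((Complex.abs b : ℂ) / (Complex.abs a : ℂ))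
                = ((Complex.abs b / Complex.abs a : ℝ) : ℂ) by push_cast; ring]
            rw [show (1 : ℂ) + ((Complex.abs b / Complex.abs a : ℝ) : ℂ)
                = (((1 + Complex.abs b / Complex.abs a : ℝ)) : ℂ) by push_cast; ring]
            rw [Complex.abs_ofReal, _root_.abs_of_nonneg]
            positivity
          rw [this, mul_add, mul_one, mul_div_cancel₀]
          exact Complex.abs.ne_zero h0
  set p : ℂ → ℂ := fun w => deriv h w + c * deriv g w with hp
  have hpd : DifferentiableOn ℂ p (ball 0 1) := hh'.add (hg'.const_mul c)
  have hp0 : p 0 = 1 := by simp [hp, hh1, hg1]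
  have hpre : ∀ w ∈ ball (0:ℂ) 1, 0 < (p w).re := by
    intro w hw
    have h1 := hclass w hw
    have h2 : |(c * deriv g w).re| ≤ Complex.abs (c * deriv g w) := Complex.abs_re_le_abs _
    have h3 : Complex.abs (c * deriv g w) = Complex.abs (deriv g w) := by
      rw [map_mul, hc1, one_mul]
    rw [hp]
    simp only [Complex.add_re]
    rw [h3] at h2
    have := abs_le.mp h2
    linarith
  have := cara_pointwise p hpd hp0 hpre hz
  have hpz : p z - 1 = a + c * b := by rw [hp, ha, hb]; ring
  rw [hpz, hcb] at this
  exact this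

end Main

section MLB
variable {M : ℝ} {h g : ℂ → ℂ}

lemma M_lower (hM : 0 < M) (hh : DifferentiableOn ℂ h (Metric.ball 0 1))
    (hg : DifferentiableOn ℂ g (Metric.ball 0 1))
    (hh0 : h 0 = 0) (hh1 : deriv h 0 = 1) (hg0 : g 0 = 0) (hg1 : deriv g 0 = 0)
    (hbound : ∀ z ∈ Metric.ball (0:ℂ) 1,
      Complex.abs (h z + starRingEnd ℂ (g z)) < M) :
    Real.pi / 4 ≤ M := by
  have h01 : (0:ℂ) ∈ ball (0:ℂ) 1 := by simp
  set r : ℝ := Real.pi / (2 * M) with hr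
  have hrpos : 0 < r := by positivity
  set φ : ℂ → ℂ := fun z => h z + g z with hφ
  have hφd : DifferentiableOn ℂ φ (ball 0 1) := hh.add hg
  have hφre : ∀ z ∈ ball (0:ℂ) 1, |(φ z).re| < M := by
    intro z hz
    have h1 := hbound z hz
    have h2 : (φ z).re = (h z + starRingEnd ℂ (g z)).re := by
      simp [hφ, Complex.add_re, Complex.conj_re]
    rw [h2]
    exact lt_of_le_of_lt (Complex.abs_re_le_abs _) h1
  set E : ℂ → ℂ := fun z => Complex.exp ((r : ℂ) * Complex.I * φ z) with hE
  have hEre : ∀ z ∈ ball (0:ℂ) 1, 0 < (E z).re := by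
    intro z hz
    have him : ((r : ℂ) * Complex.I * φ z).im = r * (φ z).re := by
      simp [Complex.mul_im, Complex.mul_re]
    rw [hE]
    simp only [Complex.exp_re, him]
    apply mul_pos (Real.exp_pos _)
    apply Real.cos_pos_of_mem_Ioo
    constructor
    · have := (abs_lt.mp (hφre z hz)).1
      calc -(Real.pi/2) = r * (-M) := by rw [hr]; field_simp
        _ < r * (φ z).re := by exact (mul_lt_mul_iff_right₀ hrpos).mpr (by linarith)
    · have := (abs_lt.mp (hφre z hz)).2
      calc r * (φ z).re < r * M := (mul_lt_mul_iff_right₀ hrpos).mpr this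
        _ = Real.pi/2 := by rw [hr]; field_simp
  have hEd : DifferentiableOn ℂ E (ball 0 1) :=
    ((hφd.const_mul _).cexp)
  have hden : ∀ z ∈ ball (0:ℂ) 1, E z + 1 ≠ 0 := by
    intro z hz hc
    have : (E z + 1).re = 0 := by rw [hc]; simp
    have := hEre z hz
    simp [Complex.add_re] at *
    linarith
  set ω : ℂ → ℂ := fun z => (E z - 1) / (E z + 1) with hω
  have hωd : DifferentiableOn ℂ ω (ball 0 1) :=
    DifferentiableOn.div (hEd.sub (differentiableOn_const 1))
      (hEd.add (differentiableOn_const 1)) hden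
  have hE0 : E 0 = 1 := by simp [hE, hφ, hh0, hg0]
  have hω0 : ω 0 = 0 := by simp [hω, hE0]
  have hωmaps : Set.MapsTo ω (ball 0 1) (ball (ω 0) 1) := by
    rw [hω0]
    intro w hw
    have h1 : Complex.abs (E w - 1) < Complex.abs (E w + 1) := by
      have heq : Complex.normSq (E w + 1) - Complex.normSq (E w - 1) = 4 * (E w).re := by
        simp [Complex.normSq_apply, Complex.add_re, Complex.add_im, Complex.sub_re,
          Complex.sub_im]
        ring
      have h4 := hEre w hw
      have h5 : Complex.normSq (E w - 1) < Complex.normSq (E w + 1) := by linarith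
      have := Real.sqrt_lt_sqrt (Complex.normSq_nonneg _) h5
      simpa [Complex.abs_apply] using this
    have hpos : 0 < Complex.abs (E w + 1) := lt_of_le_of_lt (Complex.abs.nonneg _) h1
    have : Complex.abs (ω w) < 1 := by
      rw [hω]; simp only [map_div₀]; rw [div_lt_one hpos]; exact h1
    simpa [mem_ball, dist_eq, Complex.norm_eq_abs] using this
  -- derivative of ω at 0
  have hφ0 : HasDerivAt φ 1 0 := by
    have h1 : HasDerivAt h (deriv h 0) 0 :=
      (hh.differentiableAt (isOpen_ball.mem_nhds h01)).hasDerivAt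
    have h2 : HasDerivAt g (deriv g 0) 0 :=
      (hg.differentiableAt (isOpen_ball.mem_nhds h01)).hasDerivAt
    rw [hh1] at h1; rw [hg1] at h2
    have := h1.add h2; rw [add_zero] at this; exact this
  have hinner : HasDerivAt (fun z => (r:ℂ) * Complex.I * φ z) ((r:ℂ) * Complex.I) 0 := by
    simpa using hφ0.const_mul ((r:ℂ) * Complex.I)
  have hED : HasDerivAt E ((r:ℂ) * Complex.I) 0 := by
    have := hinner.cexp
    simpa [hφ, hh0, hg0] using this
  have hωD : HasDerivAt ω ((r:ℂ) * Complex.I / 2) 0 := by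
    have hd2 : E 0 + 1 ≠ 0 := by rw [hE0]; norm_num
    have := (hED.sub_const 1).div (hED.add_const 1) hd2
    refine this.congr_deriv ?_
    rw [hE0]
    ring
  have hschwarz := Complex.norm_deriv_le_div_of_mapsTo_ball hωd (hωmaps.mono_right ball_subset_closedBall) one_pos
  rw [hωD.deriv] at hschwarz
  have habs : ‖(r:ℂ) * Complex.I / 2‖ = r / 2 := by
    simp [Complex.norm_eq_abs, map_div₀, Complex.abs_ofReal, _root_.abs_of_nonneg hrpos.le]
  rw [habs] at hschwarz
  have : r ≤ 2 := by linarith [hschwarz, (by norm_num : (1:ℝ)/1 = 1)]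
  rw [hr] at this
  rw [div_le_iff₀ (by positivity)] at this
  linarith [this]

end MLB

lemma hasDerivAt_conj_comp {u : ℝ → ℂ} {d : ℂ} {t : ℝ} (hu : HasDerivAt u d t) :
    HasDerivAt (fun s => (starRingEnd ℂ) (u s)) ((starRingEnd ℂ) d) t := by
  have h1 : HasFDerivAt (starRingEnd ℂ) Complex.conjCLE.toContinuousLinearMap (u t) :=
    Complex.conjCLE.toContinuousLinearMap.hasFDerivAt
  have := h1.comp_hasDerivAt t hu
  exact this

section Core
variable {h g : ℂ → ℂ}

lemma core (hh : DifferentiableOn ℂ h (Metric.ball 0 1))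
    (hg : DifferentiableOn ℂ g (Metric.ball 0 1))
    (hh1 : deriv h 0 = 1) (hg1 : deriv g 0 = 0)
    (hclass : ∀ z ∈ Metric.ball (0:ℂ) 1, (deriv h z).re > Complex.abs (deriv g z))
    {r : ℝ} (hr1 : r < 1) {z₁ z₂ : ℂ}
    (h1 : Complex.abs z₁ ≤ r) (h2 : Complex.abs z₂ ≤ r)
    (φ : ℝ → ℝ) (hφcont : ContinuousOn φ (Icc 0 1))
    (hφle : ∀ t ∈ Icc (0:ℝ) 1,
      φ t ≤ 1 - 2 * Complex.abs (z₂ + t • (z₁ - z₂)) / (1 - Complex.abs (z₂ + t • (z₁ - z₂)))) :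
    (Complex.abs (z₁ - z₂))^2 * ∫ t in (0:ℝ)..1, φ t ≤
      (((h z₁ + (starRingEnd ℂ) (g z₁)) - (h z₂ + (starRingEnd ℂ) (g z₂)))
        * (starRingEnd ℂ) (z₁ - z₂)).re := by
  have hr0 : 0 ≤ r := le_trans (Complex.abs.nonneg _) h1
  set δ : ℂ := z₁ - z₂ with hδ
  set γ : ℝ → ℂ := fun t => z₂ + t • δ with hγ
  have hγmem : ∀ t ∈ Icc (0:ℝ) 1, Complex.abs (γ t) ≤ r := by
    intro t ht
    have : γ t = (1 - t) • z₂ + t • z₁ := by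
      rw [hγ, hδ]; push_cast; module
    rw [this]
    calc Complex.abs ((1 - t) • z₂ + t • z₁)
        ≤ Complex.abs ((1-t) • z₂) + Complex.abs (t • z₁) := Complex.abs.add_le _ _
      _ = (1-t) * Complex.abs z₂ + t * Complex.abs z₁ := by
          rw [Complex.real_smul, Complex.real_smul, map_mul, map_mul,
            Complex.abs_ofReal, Complex.abs_ofReal,
            _root_.abs_of_nonneg ht.1,
            _root_.abs_of_nonneg (by linarith [ht.2] : (0:ℝ) ≤ 1 - t)]
      _ ≤ (1-t) * r + t * r := by
          apply add_le_add
          · exact mul_le_mul_of_nonneg_left h2 (by linarith [ht.2])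
          · exact mul_le_mul_of_nonneg_left h1 ht.1
      _ = r := by ring
  have hγball : ∀ t ∈ Icc (0:ℝ) 1, γ t ∈ ball (0:ℂ) 1 := by
    intro t ht
    simp only [mem_ball, dist_zero_right, Complex.norm_eq_abs]
    exact lt_of_le_of_lt (hγmem t ht) hr1
  have hγcont : ContinuousOn γ (Icc 0 1) := by
    apply Continuous.continuousOn
    continuity
  have hh' : ContinuousOn (deriv h) (ball 0 1) :=
    ((hh.analyticOnNhd isOpen_ball).deriv).continuousOn
  have hg' : ContinuousOn (deriv g) (ball 0 1) :=
    ((hg.analyticOnNhd isOpen_ball).deriv).continuousOn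
  set F' : ℝ → ℂ := fun t => deriv h (γ t) * δ + (starRingEnd ℂ) (deriv g (γ t) * δ) with hF'
  have hF'cont : ContinuousOn F' (Icc 0 1) := by
    apply ContinuousOn.add
    · exact (hh'.comp hγcont hγball).mul continuousOn_const
    · exact Complex.continuous_conj.comp_continuousOn
        ((hg'.comp hγcont hγball).mul continuousOn_const)
  have hFTC : ((h z₁ + (starRingEnd ℂ) (g z₁)) - (h z₂ + (starRingEnd ℂ) (g z₂)))
      = ∫ t in (0:ℝ)..1, F' t := by
    have huIcc : Set.uIcc (0:ℝ) 1 = Icc 0 1 := Set.uIcc_of_le zero_le_one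
    have hderiv : ∀ t ∈ Set.uIcc (0:ℝ) 1,
        HasDerivAt (fun s => h (γ s) + (starRingEnd ℂ) (g (γ s))) (F' t) t := by
      rw [huIcc]
      intro t ht
      have hγd : HasDerivAt γ δ t := by
        have : HasDerivAt (fun s : ℝ => s • δ) ((1:ℝ) • δ) t :=
          (hasDerivAt_id t).smul_const δ
        simpa [hγ] using this.const_add z₂
      have hhd : HasDerivAt h (deriv h (γ t)) (γ t) :=
        (hh.differentiableAt (isOpen_ball.mem_nhds (hγball t ht))).hasDerivAt
      have hgd : HasDerivAt g (deriv g (γ t)) (γ t) :=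
        (hg.differentiableAt (isOpen_ball.mem_nhds (hγball t ht))).hasDerivAt
      have hc1 : HasDerivAt (fun s => h (γ s)) (deriv h (γ t) * δ) t := by
        have := hhd.scomp t hγd
        rw [smul_eq_mul, mul_comm] at this; exact this
      have hc2 : HasDerivAt (fun s => g (γ s)) (deriv g (γ t) * δ) t := by
        have := hgd.scomp t hγd
        rw [smul_eq_mul, mul_comm] at this; exact this
      exact hc1.add (hasDerivAt_conj_comp hc2)
    have hint : IntervalIntegrable F' MeasureTheory.volume 0 1 := by
      apply ContinuousOn.intervalIntegrable
      rwa [huIcc]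
    have := intervalIntegral.integral_eq_sub_of_hasDerivAt hderiv hint
    rw [this, hγ]
    simp [hδ]
  -- multiply by conj δ and take re
  have hmul : ((h z₁ + (starRingEnd ℂ) (g z₁)) - (h z₂ + (starRingEnd ℂ) (g z₂)))
      * (starRingEnd ℂ) δ = ∫ t in (0:ℝ)..1, F' t * (starRingEnd ℂ) δ := by
    rw [hFTC, intervalIntegral.integral_mul_const]
  have hintc : IntervalIntegrable (fun t => F' t * (starRingEnd ℂ) δ)
      MeasureTheory.volume 0 1 := by
    apply ContinuousOn.intervalIntegrable
    rw [Set.uIcc_of_le zero_le_one]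
    exact hF'cont.mul continuousOn_const
  have hre : (((h z₁ + (starRingEnd ℂ) (g z₁)) - (h z₂ + (starRingEnd ℂ) (g z₂)))
      * (starRingEnd ℂ) δ).re = ∫ t in (0:ℝ)..1, (F' t * (starRingEnd ℂ) δ).re := by
    rw [hmul]
    exact (Complex.reCLM.intervalIntegral_comp_comm hintc).symm
  rw [hδ] at hre ⊢
  rw [hre]
  -- pointwise bound
  have hpoint : ∀ t ∈ Icc (0:ℝ) 1,
      (Complex.abs δ)^2 * φ t ≤ (F' t * (starRingEnd ℂ) δ).re := by
    intro t ht
    have hball := hγball t ht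
    have habs : Complex.abs (γ t) < 1 := lt_of_le_of_lt (hγmem t ht) hr1
    have hpb := pair_bound hh hg hh1 hg1 hclass hball
    have hterm : (F' t * (starRingEnd ℂ) δ).re
        = Complex.normSq δ * (deriv h (γ t)).re + (deriv g (γ t) * δ * δ).re := by
      rw [hF']
      have e1 : (deriv h (γ t) * δ + (starRingEnd ℂ) (deriv g (γ t) * δ))
          * (starRingEnd ℂ) δ
          = deriv h (γ t) * (δ * (starRingEnd ℂ) δ)
            + (starRingEnd ℂ) (deriv g (γ t) * δ * δ) := by
        simp only [map_mul]
        ring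
      rw [e1, Complex.mul_conj]
      simp only [Complex.add_re, Complex.conj_re, Complex.mul_re, Complex.ofReal_re,
        Complex.ofReal_im, Complex.conj_im, Complex.mul_im]
      ring
    rw [hterm]
    have hg2 : -(Complex.abs (deriv g (γ t)) * (Complex.abs δ)^2)
        ≤ (deriv g (γ t) * δ * δ).re := by
      have := neg_abs_le (deriv g (γ t) * δ * δ).re
      have h3 : |(deriv g (γ t) * δ * δ).re| ≤ Complex.abs (deriv g (γ t) * δ * δ) :=
        Complex.abs_re_le_abs _
      have h4 : Complex.abs (deriv g (γ t) * δ * δ)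
          = Complex.abs (deriv g (γ t)) * (Complex.abs δ)^2 := by
        rw [map_mul, map_mul]; ring
      nlinarith [neg_abs_le (deriv g (γ t) * δ * δ).re]
    have hh2 : 1 - Complex.abs (deriv h (γ t) - 1) ≤ (deriv h (γ t)).re := by
      have := Complex.abs_re_le_abs (deriv h (γ t) - 1)
      have h5 : (deriv h (γ t) - 1).re = (deriv h (γ t)).re - 1 := by simp
      have := abs_le.mp this
      rw [h5] at this
      linarith [this.1]
    have hlow : 1 - 2 * Complex.abs (γ t) / (1 - Complex.abs (γ t))
        ≤ (deriv h (γ t)).re - Complex.abs (deriv g (γ t)) := by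
      linarith [hpb, hh2]
    have hφt := hφle t ht
    have hγeq : z₂ + t • (z₁ - z₂) = γ t := by rw [hγ, hδ]
    rw [hγeq] at hφt
    have hsq : Complex.normSq δ = (Complex.abs δ)^2 := (Complex.sq_abs δ).symm
    rw [hsq]
    nlinarith [sq_nonneg (Complex.abs δ), le_trans hφt hlow]
  -- integrate the pointwise bound
  have hφint : IntervalIntegrable (fun t => (Complex.abs δ)^2 * φ t)
      MeasureTheory.volume 0 1 := by
    apply ContinuousOn.intervalIntegrable
    rw [Set.uIcc_of_le zero_le_one]
    exact continuousOn_const.mul hφcont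
  have hreint : IntervalIntegrable (fun t => (F' t * (starRingEnd ℂ) δ).re)
      MeasureTheory.volume 0 1 := by
    apply ContinuousOn.intervalIntegrable
    rw [Set.uIcc_of_le zero_le_one]
    exact Complex.continuous_re.comp_continuousOn (hF'cont.mul continuousOn_const)
  calc (Complex.abs (z₁ - z₂))^2 * ∫ t in (0:ℝ)..1, φ t
      = ∫ t in (0:ℝ)..1, (Complex.abs δ)^2 * φ t := by
        rw [← intervalIntegral.integral_const_mul, hδ]
    _ ≤ ∫ t in (0:ℝ)..1, (F' t * (starRingEnd ℂ) δ).re :=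
        intervalIntegral.integral_mono_on zero_le_one hφint hreint hpoint

end Core

section Consumers
variable {h g : ℂ → ℂ}

lemma inj_on_ball (hh : DifferentiableOn ℂ h (Metric.ball 0 1))
    (hg : DifferentiableOn ℂ g (Metric.ball 0 1))
    (hh1 : deriv h 0 = 1) (hg1 : deriv g 0 = 0)
    (hclass : ∀ z ∈ Metric.ball (0:ℂ) 1, (deriv h z).re > Complex.abs (deriv g z))
    {ρ : ℝ} (hρ : ρ ≤ 1/3) :
    Set.InjOn (fun z => h z + starRingEnd ℂ (g z)) (Metric.ball 0 ρ) := by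
  intro z₁ hz₁ z₂ hz₂ heq
  by_contra hne
  set r : ℝ := max (Complex.abs z₁) (Complex.abs z₂) with hrdef
  have hr1 : Complex.abs z₁ ≤ r := le_max_left _ _
  have hr2 : Complex.abs z₂ ≤ r := le_max_right _ _
  have hrρ : r < ρ := by
    rw [hrdef]
    apply max_lt
    · simpa [mem_ball, dist_eq, Complex.dist_eq, Complex.norm_eq_abs] using hz₁
    · simpa [mem_ball, dist_eq, Complex.dist_eq, Complex.norm_eq_abs] using hz₂
  have hr3 : r < 1/3 := lt_of_lt_of_le hrρ hρ
  have hr0 : 0 ≤ r := le_trans (Complex.abs.nonneg _) hr1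
  have hrlt1 : r < 1 := by linarith
  set c : ℝ := 1 - 2 * r / (1 - r) with hc
  have hcpos : 0 < c := by
    rw [hc]
    rw [sub_pos, div_lt_one (by linarith)]
    linarith
  have hφle : ∀ t ∈ Icc (0:ℝ) 1,
      (fun _ : ℝ => c) t ≤ 1 - 2 * Complex.abs (z₂ + t • (z₁ - z₂))
        / (1 - Complex.abs (z₂ + t • (z₁ - z₂))) := by
    intro t ht
    set s := Complex.abs (z₂ + t • (z₁ - z₂)) with hs
    have hsle : s ≤ r := by
      rw [hs]
      have : z₂ + t • (z₁ - z₂) = (1 - t) • z₂ + t • z₁ := by push_cast; module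
      rw [this]
      calc Complex.abs ((1-t) • z₂ + t • z₁)
          ≤ Complex.abs ((1-t) • z₂) + Complex.abs (t • z₁) := Complex.abs.add_le _ _
        _ = (1-t) * Complex.abs z₂ + t * Complex.abs z₁ := by
            rw [Complex.real_smul, Complex.real_smul, map_mul, map_mul,
              Complex.abs_ofReal, Complex.abs_ofReal,
              _root_.abs_of_nonneg ht.1,
              _root_.abs_of_nonneg (by linarith [ht.2] : (0:ℝ) ≤ 1 - t)]
        _ ≤ (1-t) * r + t * r := by
            apply add_le_add
            · exact mul_le_mul_of_nonneg_left hr2 (by linarith [ht.2])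
            · exact mul_le_mul_of_nonneg_left hr1 ht.1
        _ = r := by ring
    have hs0 : 0 ≤ s := Complex.abs.nonneg _
    rw [hc]
    have : 2 * s / (1 - s) ≤ 2 * r / (1 - r) := by
      apply div_le_div₀ (by linarith) (by linarith) (by linarith)
      linarith
    linarith
  have hcore := core hh hg hh1 hg1 hclass hrlt1 hr1 hr2 (fun _ => c)
    continuousOn_const hφle
  have heq' : h z₁ + (starRingEnd ℂ) (g z₁) = h z₂ + (starRingEnd ℂ) (g z₂) := heq
  rw [heq'] at hcore
  simp only [sub_self, zero_mul, Complex.zero_re, intervalIntegral.integral_const,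
    smul_eq_mul, sub_zero, one_mul] at hcore
  have hδ : 0 < Complex.abs (z₁ - z₂) :=
    Complex.abs.pos (sub_ne_zero_of_ne hne)
  have := mul_pos (pow_pos hδ 2) hcpos
  linarith

lemma boundary_lower (hh : DifferentiableOn ℂ h (Metric.ball 0 1))
    (hg : DifferentiableOn ℂ g (Metric.ball 0 1))
    (hh0 : h 0 = 0) (hh1 : deriv h 0 = 1)
    (hg0 : g 0 = 0) (hg1 : deriv g 0 = 0)
    (hclass : ∀ z ∈ Metric.ball (0:ℂ) 1, (deriv h z).re > Complex.abs (deriv g z))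
    {ρ : ℝ} (hρ0 : 0 < ρ) (hρ : ρ ≤ 1/3) {z : ℂ} (hz : Complex.abs z = ρ) :
    3 * ρ + 2 * Real.log (1 - ρ) ≤ Complex.abs (h z + starRingEnd ℂ (g z)) := by
  have hρ1 : ρ < 1 := by linarith
  set φ : ℝ → ℝ := fun t => 3 - 2 / (1 - t * ρ) with hφ
  have hden : ∀ t ∈ Icc (0:ℝ) 1, 0 < 1 - t * ρ := by
    intro t ht
    have h1 : t * ρ ≤ ρ := by
      calc t * ρ ≤ 1 * ρ := mul_le_mul_of_nonneg_right ht.2 hρ0.le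
        _ = ρ := one_mul ρ
    linarith
  have hφcont : ContinuousOn φ (Icc 0 1) := by
    apply ContinuousOn.sub continuousOn_const
    apply ContinuousOn.div continuousOn_const
    · exact (continuousOn_const.sub (continuousOn_id.mul continuousOn_const))
    · intro t ht; exact (hden t ht).ne'
  have habs_seg : ∀ t ∈ Icc (0:ℝ) 1, Complex.abs ((0:ℂ) + t • (z - 0)) = t * ρ := by
    intro t ht
    rw [zero_add, sub_zero, Complex.real_smul, map_mul, Complex.abs_ofReal,
      _root_.abs_of_nonneg ht.1, hz]
  have hφle : ∀ t ∈ Icc (0:ℝ) 1,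
      φ t ≤ 1 - 2 * Complex.abs ((0:ℂ) + t • (z - 0))
        / (1 - Complex.abs ((0:ℂ) + t • (z - 0))) := by
    intro t ht
    have hd := hden t ht
    have heq2 : (1:ℝ) - 2 * (t * ρ) / (1 - t * ρ) = 3 - 2 / (1 - t * ρ) := by
      field_simp
      ring
    rw [habs_seg t ht, heq2]
  -- compute the integral of φ
  have hint : ∫ t in (0:ℝ)..1, φ t = 3 + (2/ρ) * Real.log (1 - ρ) := by
    have hderiv : ∀ t ∈ Set.uIcc (0:ℝ) 1,
        HasDerivAt (fun s => 3*s + (2/ρ) * Real.log (1 - s * ρ)) (φ t) t := by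
      rw [Set.uIcc_of_le zero_le_one]
      intro t ht
      have hd := hden t ht
      have h1 : HasDerivAt (fun s : ℝ => 1 - s * ρ) (-ρ) t := by
        simpa using ((hasDerivAt_id t).mul_const ρ).const_sub 1
      have h2 : HasDerivAt (fun s : ℝ => Real.log (1 - s * ρ)) (-ρ / (1 - t * ρ)) t :=
        h1.log hd.ne'
      have h3 : HasDerivAt (fun s : ℝ => 3 * s) 3 t := by
        simpa using (hasDerivAt_id t).const_mul (3:ℝ)
      have := h3.add (h2.const_mul (2/ρ))
      refine this.congr_deriv ?_
      rw [hφ]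
      field_simp
      ring
    have hintble : IntervalIntegrable φ MeasureTheory.volume 0 1 := by
      apply ContinuousOn.intervalIntegrable
      rwa [Set.uIcc_of_le zero_le_one]
    have := intervalIntegral.integral_eq_sub_of_hasDerivAt hderiv hintble
    rw [this]
    simp
  have hzρ : Complex.abs z ≤ ρ := le_of_eq hz
  have h0ρ : Complex.abs (0:ℂ) ≤ ρ := by simp [hρ0.le]
  have hcore := core hh hg hh1 hg1 hclass hρ1 hzρ h0ρ φ hφcont hφle
  rw [hint] at hcore
  simp only [hh0, hg0, map_zero, add_zero, sub_zero] at hcore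
  rw [hz] at hcore
  have hre_le : (((h z + (starRingEnd ℂ) (g z))) * (starRingEnd ℂ) z).re
      ≤ Complex.abs (h z + starRingEnd ℂ (g z)) * ρ := by
    calc (((h z + (starRingEnd ℂ) (g z))) * (starRingEnd ℂ) z).re
        ≤ Complex.abs (((h z + (starRingEnd ℂ) (g z))) * (starRingEnd ℂ) z) :=
          Complex.re_le_abs _
      _ = Complex.abs (h z + starRingEnd ℂ (g z)) * ρ := by
          rw [map_mul, Complex.abs_conj, hz]
  have hchain : ρ^2 * (3 + (2/ρ) * Real.log (1 - ρ))
      ≤ Complex.abs (h z + starRingEnd ℂ (g z)) * ρ := le_trans hcore hre_le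
  have hexpand : ρ^2 * (3 + (2/ρ) * Real.log (1 - ρ))
      = (3 * ρ + 2 * Real.log (1 - ρ)) * ρ := by
    field_simp
  rw [hexpand] at hchain
  exact le_of_mul_le_mul_right hchain hρ0

end Consumers

section OpenMap
variable {h g : ℂ → ℂ}

lemma image_ball_open (hh : DifferentiableOn ℂ h (Metric.ball 0 1))
    (hg : DifferentiableOn ℂ g (Metric.ball 0 1))
    (hclass : ∀ z ∈ Metric.ball (0:ℂ) 1, (deriv h z).re > Complex.abs (deriv g z))
    {ρ : ℝ} (hρ1 : ρ ≤ 1) :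
    IsOpen ((fun z => h z + starRingEnd ℂ (g z)) '' (Metric.ball 0 ρ)) := by
  rw [isOpen_iff_mem_nhds]
  rintro w ⟨z₀, hz₀, rfl⟩
  have hz₀1 : z₀ ∈ ball (0:ℂ) 1 := Metric.ball_subset_ball hρ1 hz₀
  set a : ℂ := deriv h z₀ with ha
  set b : ℂ := deriv g z₀ with hb
  have hba : Complex.abs b < Complex.abs a :=
    lt_of_lt_of_le (hclass z₀ hz₀1) (Complex.re_le_abs a)
  have hD : 0 < Complex.normSq a - Complex.normSq b := by
    rw [← Complex.sq_abs, ← Complex.sq_abs]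
    have := Complex.abs.nonneg b
    nlinarith
  set D : ℝ := Complex.normSq a - Complex.normSq b with hDdef
  have hDC : ((D:ℂ)) = a * (starRingEnd ℂ) a - b * (starRingEnd ℂ) b := by
    rw [hDdef]
    push_cast
    rw [Complex.mul_conj, Complex.mul_conj]
  have hDne : (D:ℂ) ≠ 0 := Complex.ofReal_ne_zero.mpr hD.ne'
  set conjL : ℂ →L[ℝ] ℂ := Complex.conjCLE.toContinuousLinearMap with hconjL
  set T : ℂ →L[ℝ] ℂ :=
    (ContinuousLinearMap.mul ℝ ℂ a).restrictScalars ℝ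
      + conjL.comp ((ContinuousLinearMap.mul ℝ ℂ b).restrictScalars ℝ) with hT
  set Tinv : ℂ →L[ℝ] ℂ :=
    D⁻¹ • ((ContinuousLinearMap.mul ℝ ℂ ((starRingEnd ℂ) a)).restrictScalars ℝ
      - ((ContinuousLinearMap.mul ℝ ℂ ((starRingEnd ℂ) b)).restrictScalars ℝ).comp conjL)
    with hTinv
  have hTapp : ∀ v, T v = a * v + (starRingEnd ℂ) (b * v) := by
    intro v
    simp [hT, hconjL, ContinuousLinearMap.mul_apply']
  have hTinvapp : ∀ w, Tinv w
      = (D:ℂ)⁻¹ * ((starRingEnd ℂ) a * w - (starRingEnd ℂ) b * (starRingEnd ℂ) w) := by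
    intro w
    simp [hTinv, hconjL, ContinuousLinearMap.mul_apply', Complex.real_smul]
  have hleft : Function.LeftInverse Tinv T := by
    intro v
    rw [hTapp, hTinvapp]
    simp only [map_add, map_mul, Complex.conj_conj]
    rw [inv_mul_eq_div, div_eq_iff hDne, hDC]
    ring
  have hright : Function.RightInverse Tinv T := by
    intro w
    rw [hTinvapp, hTapp]
    simp only [map_mul, map_sub, map_inv₀, Complex.conj_conj, Complex.conj_ofReal]
    rw [inv_mul_eq_div]
    field_simp
    rw [hDC]
    ring
  set e : ℂ ≃L[ℝ] ℂ := ContinuousLinearEquiv.equivOfInverse T Tinv hleft hright with he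
  -- strict derivative of f at z₀
  have hhan : AnalyticAt ℂ h z₀ := (hh.analyticOnNhd isOpen_ball) z₀ hz₀1
  have hgan : AnalyticAt ℂ g z₀ := (hg.analyticOnNhd isOpen_ball) z₀ hz₀1
  have hsh : HasStrictDerivAt h a z₀ :=
    ((hhan.contDiffAt (n := 1)).hasStrictDerivAt one_ne_zero)
  have hsg : HasStrictDerivAt g b z₀ :=
    ((hgan.contDiffAt (n := 1)).hasStrictDerivAt one_ne_zero)
  have hshF : HasStrictFDerivAt h
      (((1 : ℂ →L[ℂ] ℂ).smulRight a).restrictScalars ℝ) z₀ :=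
    HasStrictFDerivAt.restrictScalars ℝ hsh
  have hsgF : HasStrictFDerivAt g
      (((1 : ℂ →L[ℂ] ℂ).smulRight b).restrictScalars ℝ) z₀ :=
    HasStrictFDerivAt.restrictScalars ℝ hsg
  have hconjF : HasStrictFDerivAt (fun w : ℂ => (starRingEnd ℂ) w) conjL (g z₀) := by
    exact conjL.hasStrictFDerivAt
  have hcomp : HasStrictFDerivAt (fun z => (starRingEnd ℂ) (g z))
      (conjL.comp (((1 : ℂ →L[ℂ] ℂ).smulRight b).restrictScalars ℝ)) z₀ :=
    hconjF.comp z₀ hsgF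
  have hsum : HasStrictFDerivAt (fun z => h z + (starRingEnd ℂ) (g z))
      ((((1 : ℂ →L[ℂ] ℂ).smulRight a).restrictScalars ℝ)
        + conjL.comp (((1 : ℂ →L[ℂ] ℂ).smulRight b).restrictScalars ℝ)) z₀ :=
    hshF.add hcomp
  have hTeq : (e : ℂ →L[ℝ] ℂ)
      = (((1 : ℂ →L[ℂ] ℂ).smulRight a).restrictScalars ℝ)
        + conjL.comp (((1 : ℂ →L[ℂ] ℂ).smulRight b).restrictScalars ℝ) := by
    apply ContinuousLinearMap.ext
    intro v
    have h1 : (e : ℂ →L[ℝ] ℂ) v = T v := rfl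
    rw [h1, hTapp]
    simp [hconjL]
    ring
  have hstrict : HasStrictFDerivAt (fun z => h z + (starRingEnd ℂ) (g z))
      (e : ℂ →L[ℝ] ℂ) z₀ := by
    rw [hTeq]; exact hsum
  have hmap := hstrict.map_nhds_eq_of_equiv
  rw [← hmap]
  exact Filter.image_mem_map (isOpen_ball.mem_nhds hz₀)

end OpenMap

/-- Landau-type theorem for the class `W⁰_H(0)` (`Re h' > |g'|`): `f` is
injective on `D_{ρ₂}` with `ρ₂ = π/(8M + π)`, and the image `f(D_{ρ₂})`
contains the disc of radius `R₂ = π/(4M) + 2 ln(8M/(π + 8M))`. -/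
theorem landau_W0H0 (M : ℝ) (hM : 0 < M) (h g : ℂ → ℂ)
    (hh : DifferentiableOn ℂ h (Metric.ball 0 1))
    (hg : DifferentiableOn ℂ g (Metric.ball 0 1))
    (hh0 : h 0 = 0) (hh1 : deriv h 0 = 1)
    (hg0 : g 0 = 0) (hg1 : deriv g 0 = 0)
    (hclass : ∀ z ∈ Metric.ball (0:ℂ) 1, (deriv h z).re > ‖deriv g z‖)
    (hbound : ∀ z ∈ Metric.ball (0:ℂ) 1,
      ‖h z + starRingEnd ℂ (g z)‖ < M) :
    Set.InjOn (fun z => h z + starRingEnd ℂ (g z))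
        (Metric.ball 0 (Real.pi / (8 * M + Real.pi))) ∧
      Metric.ball (0:ℂ)
          (Real.pi / (4 * M) + 2 * Real.log (8 * M / (Real.pi + 8 * M))) ⊆
        (fun z => h z + starRingEnd ℂ (g z)) ''
          (Metric.ball 0 (Real.pi / (8 * M + Real.pi))) := by
  have hπ : 0 < Real.pi := Real.pi_pos
  have hM4 : Real.pi / 4 ≤ M := M_lower hM hh hg hh0 hh1 hg0 hg1 hbound
  set ρ : ℝ := Real.pi / (8 * M + Real.pi) with hρdef
  have hden : 0 < 8 * M + Real.pi := by positivity
  have hρpos : 0 < ρ := by positivity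
  have hρle : ρ ≤ 1/3 := by
    rw [hρdef, div_le_iff₀ hden]
    linarith
  have hρ1 : ρ < 1 := by linarith
  set R₂ : ℝ := Real.pi / (4 * M) + 2 * Real.log (8 * M / (Real.pi + 8 * M)) with hR₂def
  have hfrac : 8 * M / (Real.pi + 8 * M) = 1 - ρ := by
    rw [hρdef]
    field_simp
    ring
  have h1ρpos : 0 < 1 - ρ := by linarith
  -- R₂ > 0
  have hR₂pos : 0 < R₂ := by
    have hx : 0 < Real.pi / (8 * M) := by positivity
    set x : ℝ := Real.pi / (8 * M) with hxdef
    have hlog : Real.log (1 + x) < x := by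
      have := Real.log_lt_sub_one_of_pos (by linarith : (0:ℝ) < 1 + x)
        (by linarith : (1:ℝ) + x ≠ 1)
      linarith
    have hinv : 8 * M / (Real.pi + 8 * M) = (1 + x)⁻¹ := by
      rw [hxdef]
      field_simp
      ring
    have hlog2 : Real.log (8 * M / (Real.pi + 8 * M)) = -Real.log (1 + x) := by
      rw [hinv, Real.log_inv]
    have hx2 : Real.pi / (4 * M) = 2 * x := by
      rw [hxdef]; field_simp; ring
    rw [hR₂def, hlog2, hx2]
    linarith
  -- R₂ ≤ boundary bound
  have hR₂le : R₂ ≤ 3 * ρ + 2 * Real.log (1 - ρ) := by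
    rw [hR₂def, hfrac]
    have : Real.pi / (4 * M) ≤ 3 * ρ := by
      rw [hρdef, div_le_iff₀ (by positivity : (0:ℝ) < 4 * M)]
      rw [show 3 * (Real.pi / (8 * M + Real.pi)) * (4 * M)
          = 12 * M * Real.pi / (8 * M + Real.pi) by ring]
      rw [le_div_iff₀ hden]
      nlinarith
    linarith
  constructor
  · exact inj_on_ball hh hg hh1 hg1 hclass hρle
  · -- covering
    set f : ℂ → ℂ := fun z => h z + starRingEnd ℂ (g z) with hf
    set S : Set ℂ := f '' (Metric.ball 0 ρ) with hS
    have hSopen : IsOpen S := image_ball_open hh hg hclass (by linarith)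
    have hsub : Metric.closedBall (0:ℂ) ρ ⊆ Metric.ball 0 1 := by
      intro z hz
      simp only [Metric.mem_closedBall, Metric.mem_ball] at *
      linarith
    have hfc : ContinuousOn f (Metric.closedBall 0 ρ) := by
      apply ContinuousOn.add (hh.continuousOn.mono hsub)
      exact Complex.continuous_conj.comp_continuousOn (hg.continuousOn.mono hsub)
    set T : Set ℂ := f '' (Metric.closedBall 0 ρ) with hT
    have hTcompact : IsCompact T :=
      (isCompact_closedBall (0:ℂ) ρ).image_of_continuousOn hfc
    have hST : S ⊆ T := Set.image_mono Metric.ball_subset_closedBall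
    have hdisj : Disjoint S Tᶜ := (disjoint_compl_right (a := T)).mono_left hST
    have hunion : Metric.ball (0:ℂ) R₂ ⊆ S ∪ Tᶜ := by
      intro w hw
      by_cases hwT : w ∈ T
      · left
        obtain ⟨z, hz, hfz⟩ := hwT
        have hzρ : Complex.abs z ≤ ρ := by
          simpa [Complex.dist_eq, Complex.norm_eq_abs] using hz
        rcases lt_or_eq_of_le hzρ with hlt | heq
        · exact ⟨z, by simpa [Metric.mem_ball, Complex.dist_eq, Complex.norm_eq_abs] using hlt, hfz⟩
        · exfalso
          have hlow := boundary_lower hh hg hh0 hh1 hg0 hg1 hclass hρpos hρle heq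
          have hwabs : Complex.abs w < R₂ := by
            simpa [Metric.mem_ball, Complex.dist_eq, Complex.norm_eq_abs] using hw
          have hfzw : Complex.abs (h z + (starRingEnd ℂ) (g z)) = Complex.abs w := by
            rw [← hfz]
          rw [hfzw] at hlow
          linarith
      · right; exact hwT
    have hne : (Metric.ball (0:ℂ) R₂ ∩ S).Nonempty := by
      refine ⟨0, ?_, ?_⟩
      · simpa [Metric.mem_ball] using hR₂pos
      · exact ⟨0, Metric.mem_ball_self hρpos, by simp [hf, hh0, hg0]⟩
    have hconn : IsPreconnected (Metric.ball (0:ℂ) R₂) :=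
      (convex_ball (0:ℂ) R₂).isPreconnected
    exact hconn.subset_left_of_subset_union hSopen (hTcompact.isClosed.isOpen_compl)
      hdisj hunion hne
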